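/- Suppose there exists γ ∈ (0,1/k] with Σ_{a∈K} max(δ_a, γ·τ) ≤ τ. Then E[r^PICO] ≥ E[r^OPT] − k·τ. -/

import Mathlib

open scoped BigOperators Classical

namespace ExposureBandits

/-- Number of pulls of arm `a` in the (0-indexed) phase `j` of the pull sequence `pull`. -/
def pullsInPhase {k : ℕ} (T τ : ℕ) (pull : Fin T → Fin k) (j : ℕ) (a : Fin k) : ℕ :=
  (Finset.univ.filter (fun t : Fin T =>
    j * τ ≤ (t : ℕ) ∧ (t : ℕ) < (j + 1) * τ ∧ pull t = a)).card

/-- Arm `a` is available at round `t` iff its exposure constraint was satisfied in every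
completed phase. -/
def availableAt {k : ℕ} (T τ : ℕ) (δ : Fin k → ℕ) (pull : Fin T → Fin k)
    (t : Fin T) (a : Fin k) : Prop :=
  ∀ j : ℕ, (j + 1) * τ ≤ (t : ℕ) → δ a ≤ pullsInPhase T τ pull j a

/-- Conditional-expected reward of the pull sequence `pull` on the arrival sequence `q`:
pulls of unavailable (departed) arms yield zero utility. -/
noncomputable def seqReward {k n : ℕ} (T τ : ℕ) (μ : Fin n → Fin k → ℝ) (δ : Fin k → ℕ)
    (pull : Fin T → Fin k) (q : Fin T → Fin n) : ℝ :=
  ∑ t : Fin T, if availableAt T τ δ pull t (pull t) then μ (q t) (pull t) else 0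

/-- A deterministic online algorithm for the stochastic-optimization task: the arm pulled at
round `t` may depend only on the types observed in rounds `1,…,t`. -/
def Causal {k n T : ℕ} (f : (Fin T → Fin n) → Fin T → Fin k) : Prop :=
  ∀ q q' : Fin T → Fin n, ∀ t : Fin T,
    (∀ s : Fin T, s ≤ t → q s = q' s) → f q t = f q' t

abbrev Alg (k n T : ℕ) := {f : (Fin T → Fin n) → Fin T → Fin k // Causal f}

/-- Probability of the i.i.d. arrival sequence `q` under the arrival distribution `P`. -/
noncomputable def seqProb {n : ℕ} (T : ℕ) (P : Fin n → ℝ) (q : Fin T → Fin n) : ℝ :=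
  ∏ t : Fin T, P (q t)

/-- Expected reward of the algorithm `A`. -/
noncomputable def expReward {k n : ℕ} (T τ : ℕ) (P : Fin n → ℝ) (μ : Fin n → Fin k → ℝ)
    (δ : Fin k → ℕ) (A : Alg k n T) : ℝ :=
  ∑ q : Fin T → Fin n, seqProb T P q * seqReward T τ μ δ (A.1 q) q

/-- The optimal expected reward: the value of the benchmark `OPT`. -/
noncomputable def optReward (k n T τ : ℕ) (P : Fin n → ℝ) (μ : Fin n → Fin k → ℝ)
    (δ : Fin k → ℕ) : ℝ :=
  ⨆ A : Alg k n T, expReward T τ P μ δ A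

/-- Property 1 (phase independence): whenever the type prefixes of two phases agree, the
algorithm's pulls at the corresponding rounds agree. -/
def PhaseInd {k n T : ℕ} (τ : ℕ) (A : Alg k n T) : Prop :=
  ∀ q : Fin T → Fin n, ∀ i j s : ℕ, s < τ →
    ∀ (hi : i * τ + s < T) (hj : j * τ + s < T),
      (∀ l : ℕ, l ≤ s → ∀ (hli : i * τ + l < T) (hlj : j * τ + l < T),
          q ⟨i * τ + l, hli⟩ = q ⟨j * τ + l, hlj⟩) →
      A.1 q ⟨i * τ + s, hi⟩ = A.1 q ⟨j * τ + s, hj⟩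

/-- Property 2 (commitment to `Z`): the algorithm pulls only arms of `Z` and, with
probability 1, every arm of `Z` receives at least its exposure threshold in every phase. -/
def Committed {k n T : ℕ} (τ : ℕ) (δ : Fin k → ℕ) (Z : Finset (Fin k)) (A : Alg k n T) : Prop :=
  ∀ q : Fin T → Fin n,
    (∀ t : Fin T, A.1 q t ∈ Z) ∧
    (∀ j : ℕ, (j + 1) * τ ≤ T → ∀ a ∈ Z, δ a ≤ pullsInPhase T τ (A.1 q) j a)

/-- The value of `PICO`: the best expected reward among phase-independent algorithms committed
to some subset of the arms. -/
noncomputable def picoReward (k n T τ : ℕ) (P : Fin n → ℝ) (μ : Fin n → Fin k → ℝ)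
    (δ : Fin k → ℕ) : ℝ :=
  ⨆ A : {A : Alg k n T // PhaseInd τ A ∧ ∃ Z : Finset (Fin k), Committed τ δ Z A},
    expReward T τ P μ δ A.1



open Finset

section Split
variable {k n τ N : ℕ}

/-- bijection between rounds and (phase, offset) pairs -/
def splitRound (N τ : ℕ) (hτ : 0 < τ) : Fin (N * τ) ≃ Fin N × Fin τ where
  toFun t := (⟨(t : ℕ) / τ, by
      have := t.2; exact Nat.div_lt_of_lt_mul (mul_comm N τ ▸ this)⟩,
    ⟨(t : ℕ) % τ, Nat.mod_lt _ hτ⟩)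
  invFun js := ⟨(js.1 : ℕ) * τ + (js.2 : ℕ), by
      have h1 : (js.1 : ℕ) + 1 ≤ N := js.1.2
      calc (js.1 : ℕ) * τ + (js.2 : ℕ) < (js.1 : ℕ) * τ + τ := by omega
        _ = ((js.1 : ℕ) + 1) * τ := by ring
        _ ≤ N * τ := Nat.mul_le_mul_right _ h1⟩
  left_inv t := by
    ext
    show (t : ℕ) / τ * τ + (t : ℕ) % τ = t
    rw [Nat.mul_comm]
    exact Nat.div_add_mod (t:ℕ) τ
  right_inv js := by
    have h2 := js.2.2
    ext
    · show ((js.1 : ℕ) * τ + (js.2 : ℕ)) / τ = js.1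
      rw [Nat.add_comm, Nat.add_mul_div_right _ _ hτ, Nat.div_eq_of_lt h2, Nat.zero_add]
    · show ((js.1 : ℕ) * τ + (js.2 : ℕ)) % τ = js.2
      rw [Nat.add_comm, Nat.add_mul_mod_self_right, Nat.mod_eq_of_lt h2]

lemma splitRound_symm_coe (hτ : 0 < τ) (j : Fin N) (s : Fin τ) :
    (((splitRound N τ hτ).symm (j, s) : Fin (N * τ)) : ℕ) = (j : ℕ) * τ + (s : ℕ) := rfl

/-- assemble a global type sequence from per-phase sequences -/
def glue (n : ℕ) {N τ : ℕ} (hτ : 0 < τ) (Q : Fin N → Fin τ → Fin n) : Fin (N * τ) → Fin n :=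
  fun t => Q ((splitRound N τ hτ) t).1 ((splitRound N τ hτ) t).2

lemma glue_apply_symm (hτ : 0 < τ) (Q : Fin N → Fin τ → Fin n) (j : Fin N) (s : Fin τ) :
    glue n hτ Q ((splitRound N τ hτ).symm (j, s)) = Q j s := by
  simp [glue]

/-- the function-space equivalence -/
def glueEquiv (n N τ : ℕ) (hτ : 0 < τ) : (Fin N → Fin τ → Fin n) ≃ (Fin (N * τ) → Fin n) where
  toFun := glue n hτ
  invFun q := fun j s => q ((splitRound N τ hτ).symm (j, s))
  left_inv Q := by
    funext j s; simp [glue]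
  right_inv q := by
    funext t; simp [glue]

lemma sum_glue (hτ : 0 < τ) (f : (Fin (N * τ) → Fin n) → ℝ) :
    ∑ q : Fin (N * τ) → Fin n, f q = ∑ Q : Fin N → Fin τ → Fin n, f (glue n hτ Q) :=
  (Fintype.sum_bijective (glueEquiv n N τ hτ) (glueEquiv n N τ hτ).bijective _ f
    (fun _ => rfl)).symm

lemma prod_split (hτ : 0 < τ) (g : Fin (N * τ) → ℝ) :
    ∏ t : Fin (N * τ), g t = ∏ j : Fin N, ∏ s : Fin τ, g ((splitRound N τ hτ).symm (j, s)) := by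
  rw [← Fintype.prod_prod_type (fun js : Fin N × Fin τ => g ((splitRound N τ hτ).symm js))]
  exact Fintype.prod_bijective (splitRound N τ hτ) (splitRound N τ hτ).bijective _ _
    (fun t => by rw [Equiv.symm_apply_apply])

end Split
section Phase
variable {k n τ : ℕ}

/-- number of pulls of `a` in a single-phase pull vector -/
def cnt1 {k τ : ℕ} (p : Fin τ → Fin k) (a : Fin k) : ℕ :=
  (Finset.univ.filter (fun s : Fin τ => p s = a)).card

/-- single-phase commitment -/
def commit1 {k τ : ℕ} (δ : Fin k → ℕ) (Z : Finset (Fin k)) (p : Fin τ → Fin k) : Prop :=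
  ∀ a ∈ Z, δ a ≤ cnt1 p a

/-- single-phase reward restricted to `Z` -/
noncomputable def val1 {k n τ : ℕ} (μ : Fin n → Fin k → ℝ) (Z : Finset (Fin k))
    (w : Fin τ → Fin n) (p : Fin τ → Fin k) : ℝ :=
  ∑ s : Fin τ, if p s ∈ Z then μ (w s) (p s) else 0

/-- causal single-phase policy -/
def CausalP {k n τ : ℕ} (π : (Fin τ → Fin n) → Fin τ → Fin k) : Prop :=
  ∀ w w' : Fin τ → Fin n, ∀ s : Fin τ, (∀ s' : Fin τ, s' ≤ s → w s' = w' s') → π w s = π w' s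

/-- probability weight of a single-phase type sequence -/
noncomputable def pw {n : ℕ} (τ : ℕ) (P : Fin n → ℝ) (w : Fin τ → Fin n) : ℝ :=
  ∏ s : Fin τ, P (w s)

/-- value of a single-phase policy with commitment indicator -/
noncomputable def phVal {k n : ℕ} (τ : ℕ) (P : Fin n → ℝ) (μ : Fin n → Fin k → ℝ)
    (δ : Fin k → ℕ) (Z : Finset (Fin k)) (π : (Fin τ → Fin n) → Fin τ → Fin k) : ℝ :=
  ∑ w : Fin τ → Fin n, pw τ P w * (if commit1 δ Z (π w) then val1 μ Z w (π w) else 0)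

variable {P : Fin n → ℝ}

lemma pw_nonneg (hP : ∀ u, 0 < P u) (w : Fin τ → Fin n) : 0 ≤ pw τ P w :=
  Finset.prod_nonneg (fun s _ => (hP (w s)).le)

lemma sum_pw (hPsum : ∑ u, P u = 1) : ∑ w : Fin τ → Fin n, pw τ P w = 1 := by
  classical
  unfold pw
  calc ∑ w : Fin τ → Fin n, ∏ s, P (w s)
      = ∑ w ∈ Fintype.piFinset (fun _ : Fin τ => (Finset.univ : Finset (Fin n))), ∏ s, P (w s) := by
        rw [Fintype.piFinset_univ]
    _ = ∏ _s : Fin τ, ∑ u, P u := (Finset.prod_univ_sum _ _).symm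
    _ = 1 := by rw [hPsum]; simp

end Phase

section Expect
variable {k n τ N : ℕ} {P : Fin n → ℝ} {μ : Fin n → Fin k → ℝ} {δ : Fin k → ℕ}

/-- product probability over phases -/
noncomputable def probN (N τ : ℕ) (P : Fin n → ℝ) (Q : Fin N → Fin τ → Fin n) : ℝ :=
  ∏ j : Fin N, pw τ P (Q j)

lemma probN_nonneg (hP : ∀ u, 0 < P u) (Q : Fin N → Fin τ → Fin n) : 0 ≤ probN N τ P Q :=
  Finset.prod_nonneg (fun j _ => pw_nonneg hP (Q j))

lemma sum_probN (hPsum : ∑ u, P u = 1) :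
    ∑ Q : Fin N → Fin τ → Fin n, probN N τ P Q = 1 := by
  classical
  unfold probN
  calc ∑ Q : Fin N → Fin τ → Fin n, ∏ j, pw τ P (Q j)
      = ∑ Q ∈ Fintype.piFinset (fun _ : Fin N => (Finset.univ : Finset (Fin τ → Fin n))),
          ∏ j, pw τ P (Q j) := by rw [Fintype.piFinset_univ]
    _ = ∏ _j : Fin N, ∑ w : Fin τ → Fin n, pw τ P w := (Finset.prod_univ_sum _ _).symm
    _ = 1 := by rw [sum_pw hPsum]; simp

lemma seqProb_glue (hτ : 0 < τ) (Q : Fin N → Fin τ → Fin n) :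
    seqProb (N * τ) P (glue n hτ Q) = probN N τ P Q := by
  unfold seqProb probN pw
  rw [prod_split hτ (fun t => P (glue n hτ Q t))]
  exact Finset.prod_congr rfl (fun j _ => Finset.prod_congr rfl
    (fun s _ => by rw [glue_apply_symm]))

lemma expReward_eq (hτ : 0 < τ) (A : Alg k n (N * τ)) :
    expReward (N * τ) τ P μ δ A =
      ∑ Q : Fin N → Fin τ → Fin n,
        probN N τ P Q * seqReward (N * τ) τ μ δ (A.1 (glue n hτ Q)) (glue n hτ Q) := by
  unfold expReward
  rw [sum_glue hτ (fun q => seqProb (N * τ) P q * seqReward (N * τ) τ μ δ (A.1 q) q)]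
  exact Finset.sum_congr rfl (fun Q _ => by rw [seqProb_glue hτ])

lemma pw_update (Q : Fin N → Fin τ → Fin n) (j : Fin N) (w : Fin τ → Fin n) :
    probN N τ P Q * pw τ P w = probN N τ P (Function.update Q j w) * pw τ P (Q j) := by
  classical
  have h1 : (fun i => pw τ P (Function.update Q j w i)) =
      Function.update (fun i => pw τ P (Q i)) j (pw τ P w) := by
    funext i
    by_cases hi : i = j
    · subst hi; simp
    · simp [Function.update_of_ne hi]
  have h2 : probN N τ P (Function.update Q j w) =
      pw τ P w * ∏ i ∈ Finset.univ.erase j, pw τ P (Q i) := by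
    unfold probN
    rw [show (∏ i : Fin N, pw τ P (Function.update Q j w i)) =
        ∏ i : Fin N, Function.update (fun i => pw τ P (Q i)) j (pw τ P w) i from by rw [h1],
      Finset.prod_update_of_mem (Finset.mem_univ j), Finset.sdiff_singleton_eq_erase]
  have h3 : probN N τ P Q = pw τ P (Q j) * ∏ i ∈ Finset.univ.erase j, pw τ P (Q i) := by
    unfold probN
    rw [← Finset.mul_prod_erase Finset.univ _ (Finset.mem_univ j)]
  rw [h2, h3]; ring

lemma avg_update (hPsum : ∑ u, P u = 1) (j : Fin N) (f : (Fin N → Fin τ → Fin n) → ℝ) :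
    ∑ Q : Fin N → Fin τ → Fin n, probN N τ P Q * f Q =
      ∑ Q : Fin N → Fin τ → Fin n, probN N τ P Q *
        ∑ w : Fin τ → Fin n, pw τ P w * f (Function.update Q j w) := by
  classical
  have φinv : Function.Involutive (fun Qw : (Fin N → Fin τ → Fin n) × (Fin τ → Fin n) =>
      (Function.update Qw.1 j Qw.2, Qw.1 j)) := by
    intro ⟨Q, w⟩
    simp [Function.update_idem, Function.update_eq_self]
  calc ∑ Q : Fin N → Fin τ → Fin n, probN N τ P Q * f Q
      = (∑ Q : Fin N → Fin τ → Fin n, probN N τ P Q * f Q) * ∑ w : Fin τ → Fin n, pw τ P w := by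
        rw [sum_pw hPsum, mul_one]
    _ = ∑ Qw : (Fin N → Fin τ → Fin n) × (Fin τ → Fin n),
          probN N τ P Qw.1 * pw τ P Qw.2 * f Qw.1 := by
        rw [Finset.sum_mul_sum, Fintype.sum_prod_type]
        exact Finset.sum_congr rfl (fun Q _ => Finset.sum_congr rfl (fun w _ => by ring))
    _ = ∑ Qw : (Fin N → Fin τ → Fin n) × (Fin τ → Fin n),
          probN N τ P Qw.1 * (pw τ P Qw.2 * f (Function.update Qw.1 j Qw.2)) := by
        refine Fintype.sum_bijective _ φinv.bijective _ _ (fun ⟨Q, w⟩ => ?_)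
        show probN N τ P Q * pw τ P w * f Q =
          probN N τ P (Function.update Q j w) *
            (pw τ P (Q j) * f (Function.update (Function.update Q j w) j (Q j)))
        rw [Function.update_idem, Function.update_eq_self, pw_update Q j w]; ring
    _ = ∑ Q : Fin N → Fin τ → Fin n, probN N τ P Q *
          ∑ w : Fin τ → Fin n, pw τ P w * f (Function.update Q j w) := by
        rw [Fintype.sum_prod_type]
        exact Finset.sum_congr rfl (fun Q _ => by rw [Finset.mul_sum])

lemma marginal (hPsum : ∑ u, P u = 1) (j : Fin N) (g : (Fin τ → Fin n) → ℝ) :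
    ∑ Q : Fin N → Fin τ → Fin n, probN N τ P Q * g (Q j) =
      ∑ w : Fin τ → Fin n, pw τ P w * g w := by
  classical
  rw [avg_update hPsum j (fun Q => g (Q j))]
  have : ∀ Q : Fin N → Fin τ → Fin n,
      (∑ w : Fin τ → Fin n, pw τ P w * g (Function.update Q j w j)) =
      ∑ w : Fin τ → Fin n, pw τ P w * g w := by
    intro Q
    exact Finset.sum_congr rfl (fun w _ => by rw [Function.update_self])
  calc ∑ Q : Fin N → Fin τ → Fin n, probN N τ P Q *
        ∑ w : Fin τ → Fin n, pw τ P w * g (Function.update Q j w j)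
      = ∑ Q : Fin N → Fin τ → Fin n, probN N τ P Q *
        ∑ w : Fin τ → Fin n, pw τ P w * g w := Finset.sum_congr rfl (fun Q _ => by rw [this Q])
    _ = (∑ Q : Fin N → Fin τ → Fin n, probN N τ P Q) * ∑ w : Fin τ → Fin n, pw τ P w * g w := by
        rw [Finset.sum_mul]
    _ = ∑ w : Fin τ → Fin n, pw τ P w * g w := by rw [sum_probN hPsum, one_mul]

end Expect

section Struct
variable {k n τ N : ℕ} {δ : Fin k → ℕ}

/-- the pulls of phase `j` as a single-phase pull vector -/
def phasePull (hτ : 0 < τ) (p : Fin (N * τ) → Fin k) (j : Fin N) : Fin τ → Fin k :=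
  fun s => p ((splitRound N τ hτ).symm (j, s))

lemma pullsInPhase_eq_cnt1 (hτ : 0 < τ) (p : Fin (N * τ) → Fin k) (j : Fin N) (a : Fin k) :
    pullsInPhase (N * τ) τ p (j : ℕ) a = cnt1 (phasePull hτ p j) a := by
  classical
  unfold pullsInPhase cnt1
  rw [show (Finset.univ.filter (fun t : Fin (N * τ) =>
      (j : ℕ) * τ ≤ (t : ℕ) ∧ (t : ℕ) < ((j : ℕ) + 1) * τ ∧ p t = a)) =
    (Finset.univ.filter (fun s : Fin τ => phasePull hτ p j s = a)).image
      (fun s => (splitRound N τ hτ).symm (j, s)) from ?_]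
  · rw [Finset.card_image_of_injective _ (fun s s' h => by
      have : ((j, s) : Fin N × Fin τ) = (j, s') := (splitRound N τ hτ).symm.injective h
      exact (Prod.mk.injEq _ _ _ _).mp this |>.2)]
  · ext t
    simp only [Finset.mem_filter, Finset.mem_univ, true_and, Finset.mem_image]
    constructor
    · rintro ⟨h1, h2, h3⟩
      have hexp : ((j : ℕ) + 1) * τ = (j : ℕ) * τ + τ := by ring
      have hs : (t : ℕ) - (j : ℕ) * τ < τ := by omega
      refine ⟨⟨(t : ℕ) - (j : ℕ) * τ, hs⟩, ?_, ?_⟩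
      · have ht : (splitRound N τ hτ).symm (j, ⟨(t : ℕ) - (j : ℕ) * τ, hs⟩) = t := by
          apply Fin.ext
          rw [splitRound_symm_coe]
          simp; omega
        rw [phasePull, ht, h3]
      · apply Fin.ext
        rw [splitRound_symm_coe]
        simp; omega
    · rintro ⟨s, h1, rfl⟩
      rw [splitRound_symm_coe]
      have := s.2
      have hexp : ((j : ℕ) + 1) * τ = (j : ℕ) * τ + τ := by ring
      refine ⟨by omega, by omega, h1⟩

lemma pullsInPhase_congr {T : ℕ} (p p' : Fin T → Fin k) (i : ℕ) (a : Fin k)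
    (h : ∀ t : Fin T, i * τ ≤ (t : ℕ) → (t : ℕ) < (i + 1) * τ → p t = p' t) :
    pullsInPhase T τ p i a = pullsInPhase T τ p' i a := by
  classical
  unfold pullsInPhase
  congr 1
  ext t
  simp only [Finset.mem_filter, Finset.mem_univ, true_and]
  constructor
  · rintro ⟨h1, h2, h3⟩; exact ⟨h1, h2, by rw [← h t h1 h2]; exact h3⟩
  · rintro ⟨h1, h2, h3⟩; exact ⟨h1, h2, by rw [h t h1 h2]; exact h3⟩

/-- set of arms alive at the start of phase `j` -/
def aliveSet (T τ : ℕ) (δ : Fin k → ℕ) (p : Fin T → Fin k) (j : ℕ) : Finset (Fin k) :=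
  Finset.univ.filter (fun a => ∀ i < j, δ a ≤ pullsInPhase T τ p i a)

lemma availableAt_iff (hτ : 0 < τ) (p : Fin (N * τ) → Fin k) (j : Fin N) (s : Fin τ) (a : Fin k) :
    availableAt (N * τ) τ δ p ((splitRound N τ hτ).symm (j, s)) a ↔
      a ∈ aliveSet (N * τ) τ δ p (j : ℕ) := by
  unfold availableAt aliveSet
  rw [splitRound_symm_coe]
  simp only [Finset.mem_filter, Finset.mem_univ, true_and]
  constructor
  · intro h i hi
    refine h i ?_
    calc (i + 1) * τ ≤ (j : ℕ) * τ := Nat.mul_le_mul_right _ hi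
      _ ≤ (j : ℕ) * τ + (s : ℕ) := Nat.le_add_right _ _
  · intro h i hi
    have hs := s.2
    have hexp : ((j : ℕ) + 1) * τ = (j : ℕ) * τ + τ := by ring
    refine h i ?_
    by_contra hc
    push_neg at hc
    have h4 : ((j : ℕ) + 1) * τ ≤ (i + 1) * τ := Nat.mul_le_mul_right _ (by omega)
    omega

lemma aliveSet_mono {T : ℕ} (p : Fin T → Fin k) (j : ℕ) :
    aliveSet T τ δ p (j + 1) ⊆ aliveSet T τ δ p j := by
  intro a ha
  simp only [aliveSet, Finset.mem_filter, Finset.mem_univ, true_and] at ha ⊢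
  exact fun i hi => ha i (by omega)

/-- phase `j` is good: every alive arm fulfills its quota -/
def goodPh (T τ : ℕ) (δ : Fin k → ℕ) (p : Fin T → Fin k) (j : ℕ) : Prop :=
  ∀ a ∈ aliveSet T τ δ p j, δ a ≤ pullsInPhase T τ p j a

lemma aliveSet_succ_of_good {T : ℕ} (p : Fin T → Fin k) (j : ℕ) (h : goodPh T τ δ p j) :
    aliveSet T τ δ p (j + 1) = aliveSet T τ δ p j := by
  apply Finset.Subset.antisymm (aliveSet_mono p j)
  intro a ha
  simp only [aliveSet, Finset.mem_filter, Finset.mem_univ, true_and] at ha ⊢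
  intro i hi
  rcases Nat.lt_succ_iff_lt_or_eq.mp hi with hi' | rfl
  · exact ha i hi'
  · exact h a (by simp only [aliveSet, Finset.mem_filter, Finset.mem_univ, true_and]; exact ha)

lemma badcount {T : ℕ} (p : Fin T → Fin k) (m : ℕ) :
    (aliveSet T τ δ p m).card + ∑ j ∈ Finset.range m,
      (if goodPh T τ δ p j then (0 : ℕ) else 1) ≤ k := by
  classical
  induction m with
  | zero =>
    simp only [Finset.range_zero, Finset.sum_empty, Nat.add_zero]
    calc (aliveSet T τ δ p 0).card ≤ (Finset.univ : Finset (Fin k)).card :=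
        Finset.card_le_card (Finset.filter_subset _ _)
      _ = k := Finset.card_univ.trans (Fintype.card_fin k)
  | succ m ih =>
    rw [Finset.sum_range_succ]
    by_cases hg : goodPh T τ δ p m
    · rw [if_pos hg, aliveSet_succ_of_good p m hg]
      omega
    · rw [if_neg hg]
      have hlt : (aliveSet T τ δ p (m + 1)).card < (aliveSet T τ δ p m).card := by
        apply Finset.card_lt_card
        rw [Finset.ssubset_iff_of_subset (aliveSet_mono p m)]
        unfold goodPh at hg
        push_neg at hg
        obtain ⟨a, ha, hqa⟩ := hg
        refine ⟨a, ha, fun hmem => ?_⟩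
        simp only [aliveSet, Finset.mem_filter, Finset.mem_univ, true_and] at hmem
        exact absurd (hmem m (Nat.lt_succ_self m)) (by omega)
      omega

end Struct

section PartB
variable {k n τ N : ℕ} {P : Fin n → ℝ} {μ : Fin n → Fin k → ℝ} {δ : Fin k → ℕ}

lemma sum_split (hτ : 0 < τ) (g : Fin (N * τ) → ℝ) :
    ∑ t : Fin (N * τ), g t = ∑ j : Fin N, ∑ s : Fin τ, g ((splitRound N τ hτ).symm (j, s)) := by
  rw [← Fintype.sum_prod_type (f := fun js : Fin N × Fin τ => g ((splitRound N τ hτ).symm js))]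
  exact Fintype.sum_bijective (splitRound N τ hτ) (splitRound N τ hτ).bijective _ _
    (fun t => by rw [Equiv.symm_apply_apply])

lemma val1_nonneg (hμ : ∀ u a, 0 ≤ μ u a ∧ μ u a ≤ 1) (Z : Finset (Fin k))
    (w : Fin τ → Fin n) (p : Fin τ → Fin k) : 0 ≤ val1 μ Z w p :=
  Finset.sum_nonneg (fun s _ => by
    by_cases h : p s ∈ Z
    · rw [if_pos h]; exact (hμ (w s) (p s)).1
    · rw [if_neg h])

lemma val1_le_tau (hμ : ∀ u a, 0 ≤ μ u a ∧ μ u a ≤ 1) (Z : Finset (Fin k))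
    (w : Fin τ → Fin n) (p : Fin τ → Fin k) : val1 μ Z w p ≤ (τ : ℝ) := by
  calc val1 μ Z w p ≤ ∑ _s : Fin τ, (1 : ℝ) := Finset.sum_le_sum (fun s _ => by
      by_cases h : p s ∈ Z
      · rw [if_pos h]; exact (hμ (w s) (p s)).2
      · rw [if_neg h]; norm_num)
    _ = (τ : ℝ) := by simp

lemma splitRound_fst (hτ : 0 < τ) (t : Fin (N * τ)) :
    (((splitRound N τ hτ) t).1 : ℕ) = (t : ℕ) / τ := rfl

lemma splitRound_snd (hτ : 0 < τ) (t : Fin (N * τ)) :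
    (((splitRound N τ hτ) t).2 : ℕ) = (t : ℕ) % τ := rfl

lemma glue_update_lt (hτ : 0 < τ) (Q : Fin N → Fin τ → Fin n) (j : Fin N)
    (w : Fin τ → Fin n) (t : Fin (N * τ)) (ht : (t : ℕ) < (j : ℕ) * τ) :
    glue n hτ (Function.update Q j w) t = glue n hτ Q t := by
  unfold glue
  have hne : ((splitRound N τ hτ) t).1 ≠ j := by
    intro h
    have : (t : ℕ) / τ = (j : ℕ) := by rw [← splitRound_fst hτ t, h]
    have := (Nat.div_lt_iff_lt_mul hτ).mpr ht
    omega
  rw [Function.update_of_ne hne]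

lemma glue_update_phase (hτ : 0 < τ) (Q : Fin N → Fin τ → Fin n) (j : Fin N)
    (w : Fin τ → Fin n) (t : Fin (N * τ)) (h1 : (j : ℕ) * τ ≤ (t : ℕ))
    (h2 : (t : ℕ) < ((j : ℕ) + 1) * τ) :
    glue n hτ (Function.update Q j w) t = w ⟨(t : ℕ) % τ, Nat.mod_lt _ hτ⟩ := by
  unfold glue
  have hfst : ((splitRound N τ hτ) t).1 = j := by
    apply Fin.ext
    rw [splitRound_fst hτ t]
    exact Nat.div_eq_of_lt_le h1 h2
  rw [hfst, Function.update_self]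
  congr 1

/-- the two glued sequences obtained by updating phase `j` with prefixes that agree up to `s`
agree on all rounds up to round `s` of phase `j` -/
lemma glue_update_agree (hτ : 0 < τ) (Q : Fin N → Fin τ → Fin n) (j : Fin N)
    (w w' : Fin τ → Fin n) (s : Fin τ) (hws : ∀ s' : Fin τ, s' ≤ s → w s' = w' s')
    (t : Fin (N * τ)) (ht : (t : ℕ) ≤ (j : ℕ) * τ + (s : ℕ)) :
    glue n hτ (Function.update Q j w) t = glue n hτ (Function.update Q j w') t := by
  by_cases hlt : (t : ℕ) < (j : ℕ) * τ
  · rw [glue_update_lt hτ Q j w t hlt, glue_update_lt hτ Q j w' t hlt]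
  · push_neg at hlt
    have hs := s.2
    have hexp : ((j : ℕ) + 1) * τ = (j : ℕ) * τ + τ := by ring
    have h2 : (t : ℕ) < ((j : ℕ) + 1) * τ := by omega
    rw [glue_update_phase hτ Q j w t hlt h2, glue_update_phase hτ Q j w' t hlt h2]
    apply hws
    show (t : ℕ) % τ ≤ (s : ℕ)
    have : (t : ℕ) % τ = (t : ℕ) - (j : ℕ) * τ := by
      conv_lhs => rw [show (t : ℕ) = (j : ℕ) * τ + ((t : ℕ) - (j : ℕ) * τ) by omega]
      rw [Nat.add_comm, Nat.add_mul_mod_self_right, Nat.mod_eq_of_lt (by omega)]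
    omega

/-- single-phase policy induced by algorithm `A` in phase `j` given context `Q` -/
def phasePolicy (hτ : 0 < τ) (A : Alg k n (N * τ)) (Q : Fin N → Fin τ → Fin n) (j : Fin N) :
    (Fin τ → Fin n) → Fin τ → Fin k :=
  fun w s => A.1 (glue n hτ (Function.update Q j w)) ((splitRound N τ hτ).symm (j, s))

lemma phasePolicy_causal (hτ : 0 < τ) (A : Alg k n (N * τ)) (Q : Fin N → Fin τ → Fin n)
    (j : Fin N) : CausalP (phasePolicy hτ A Q j) := by
  intro w w' s hws
  apply A.2
  intro t' ht'
  have ht'' : (t' : ℕ) ≤ (j : ℕ) * τ + (s : ℕ) := by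
    have : (t' : ℕ) ≤ (((splitRound N τ hτ).symm (j, s) : Fin (N * τ)) : ℕ) := ht'
    rwa [splitRound_symm_coe] at this
  exact glue_update_agree hτ Q j w w' s hws t' ht''

/-- pulls in phases before `j` do not depend on the types of phase `j` -/
lemma pull_update_agree (hτ : 0 < τ) (A : Alg k n (N * τ)) (Q : Fin N → Fin τ → Fin n)
    (j : Fin N) (w : Fin τ → Fin n) (t : Fin (N * τ)) (ht : (t : ℕ) < (j : ℕ) * τ) :
    A.1 (glue n hτ (Function.update Q j w)) t = A.1 (glue n hτ Q) t := by
  apply A.2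
  intro s hs
  have : (s : ℕ) < (j : ℕ) * τ := lt_of_le_of_lt hs ht
  exact glue_update_lt hτ Q j w s this

lemma aliveSet_update (hτ : 0 < τ) (A : Alg k n (N * τ)) (Q : Fin N → Fin τ → Fin n)
    (j : Fin N) (w : Fin τ → Fin n) :
    aliveSet (N * τ) τ δ (A.1 (glue n hτ (Function.update Q j w))) (j : ℕ) =
      aliveSet (N * τ) τ δ (A.1 (glue n hτ Q)) (j : ℕ) := by
  ext a
  simp only [aliveSet, Finset.mem_filter, Finset.mem_univ, true_and]
  have hpp : ∀ i < (j : ℕ), pullsInPhase (N * τ) τ (A.1 (glue n hτ (Function.update Q j w))) i a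
      = pullsInPhase (N * τ) τ (A.1 (glue n hτ Q)) i a := by
    intro i hi
    apply pullsInPhase_congr
    intro t h1 h2
    apply pull_update_agree hτ A Q j w t
    calc (t : ℕ) < (i + 1) * τ := h2
      _ ≤ (j : ℕ) * τ := Nat.mul_le_mul_right _ hi
  constructor
  · intro h i hi; rw [← hpp i hi]; exact h i hi
  · intro h i hi; rw [hpp i hi]; exact h i hi

end PartB

section PartB2
variable {k n τ N : ℕ} {P : Fin n → ℝ} {μ : Fin n → Fin k → ℝ} {δ : Fin k → ℕ}

lemma seqReward_decomp (hτ : 0 < τ) (A : Alg k n (N * τ)) (Q : Fin N → Fin τ → Fin n) :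
    seqReward (N * τ) τ μ δ (A.1 (glue n hτ Q)) (glue n hτ Q) =
      ∑ j : Fin N, val1 μ (aliveSet (N * τ) τ δ (A.1 (glue n hτ Q)) (j : ℕ)) (Q j)
        (phasePull hτ (A.1 (glue n hτ Q)) j) := by
  classical
  unfold seqReward
  rw [sum_split hτ]
  refine Finset.sum_congr rfl (fun j _ => ?_)
  unfold val1
  refine Finset.sum_congr rfl (fun s _ => ?_)
  rw [glue_apply_symm]
  exact if_congr (availableAt_iff hτ (A.1 (glue n hτ Q)) j s _) rfl rfl

lemma good_part_le (hτ : 0 < τ) (hP : ∀ u, 0 < P u) (hPsum : ∑ u, P u = 1)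
    (V : ℝ) (hV : ∀ (Z : Finset (Fin k)) (π : (Fin τ → Fin n) → Fin τ → Fin k),
      CausalP π → phVal τ P μ δ Z π ≤ V)
    (A : Alg k n (N * τ)) (j : Fin N) :
    ∑ Q : Fin N → Fin τ → Fin n, probN N τ P Q *
      (if goodPh (N * τ) τ δ (A.1 (glue n hτ Q)) (j : ℕ) then
        val1 μ (aliveSet (N * τ) τ δ (A.1 (glue n hτ Q)) (j : ℕ)) (Q j)
          (phasePull hτ (A.1 (glue n hτ Q)) j) else 0) ≤ V := by
  classical
  set F : (Fin N → Fin τ → Fin n) → ℝ := fun Q =>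
    if goodPh (N * τ) τ δ (A.1 (glue n hτ Q)) (j : ℕ) then
      val1 μ (aliveSet (N * τ) τ δ (A.1 (glue n hτ Q)) (j : ℕ)) (Q j)
        (phasePull hτ (A.1 (glue n hτ Q)) j) else 0 with hF
  rw [avg_update hPsum j F]
  have key : ∀ Q : Fin N → Fin τ → Fin n,
      (∑ w : Fin τ → Fin n, pw τ P w * F (Function.update Q j w)) =
      phVal τ P μ δ (aliveSet (N * τ) τ δ (A.1 (glue n hτ Q)) (j : ℕ))
        (phasePolicy hτ A Q j) := by
    intro Q
    unfold phVal
    refine Finset.sum_congr rfl (fun w _ => ?_)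
    congr 1
    rw [hF]
    simp only []
    have hZ := aliveSet_update (δ := δ) hτ A Q j w
    have hcnt : ∀ a, pullsInPhase (N * τ) τ (A.1 (glue n hτ (Function.update Q j w))) (j : ℕ) a
        = cnt1 (phasePolicy hτ A Q j w) a := by
      intro a
      exact pullsInPhase_eq_cnt1 hτ _ j a
    have hgc : goodPh (N * τ) τ δ (A.1 (glue n hτ (Function.update Q j w))) (j : ℕ) ↔
        commit1 δ (aliveSet (N * τ) τ δ (A.1 (glue n hτ Q)) (j : ℕ))
          (phasePolicy hτ A Q j w) := by
      unfold goodPh commit1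
      rw [hZ]
      constructor
      · intro h a ha; rw [← hcnt a]; exact h a ha
      · intro h a ha; rw [hcnt a] at *; exact h a ha
    refine if_congr hgc ?_ rfl
    rw [hZ, Function.update_self]
    rfl
  calc ∑ Q : Fin N → Fin τ → Fin n, probN N τ P Q *
        ∑ w : Fin τ → Fin n, pw τ P w * F (Function.update Q j w)
      ≤ ∑ Q : Fin N → Fin τ → Fin n, probN N τ P Q * V := by
        refine Finset.sum_le_sum (fun Q _ => ?_)
        rw [key Q]
        exact mul_le_mul_of_nonneg_left
          (hV _ _ (phasePolicy_causal hτ A Q j)) (probN_nonneg hP Q)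
    _ = V := by rw [← Finset.sum_mul, sum_probN hPsum, one_mul]

lemma bad_part_le (hk : 1 ≤ k) (Q : Fin N → Fin τ → Fin n) (p : Fin (N * τ) → Fin k) :
    ∑ j : Fin N, (if goodPh (N * τ) τ δ p (j : ℕ) then (0 : ℝ) else (τ : ℝ)) ≤
      (k : ℝ) * (τ : ℝ) := by
  classical
  have hbc := badcount (τ := τ) (δ := δ) p N
  have hnat : ∑ j ∈ Finset.range N, (if goodPh (N * τ) τ δ p j then (0 : ℕ) else 1) ≤ k := by
    omega
  calc ∑ j : Fin N, (if goodPh (N * τ) τ δ p (j : ℕ) then (0 : ℝ) else (τ : ℝ))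
      = ∑ j ∈ Finset.range N, (if goodPh (N * τ) τ δ p j then (0 : ℝ) else (τ : ℝ)) :=
        Fin.sum_univ_eq_sum_range (fun j => if goodPh (N * τ) τ δ p j then (0 : ℝ) else (τ : ℝ)) N
    _ = ∑ j ∈ Finset.range N,
          (τ : ℝ) * ((if goodPh (N * τ) τ δ p j then (0 : ℕ) else 1 : ℕ) : ℝ) := by
        refine Finset.sum_congr rfl (fun j _ => ?_)
        by_cases h : goodPh (N * τ) τ δ p j
        · rw [if_pos h, if_pos h]; norm_num
        · rw [if_neg h, if_neg h]; norm_num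
    _ = (τ : ℝ) * ((∑ j ∈ Finset.range N,
          (if goodPh (N * τ) τ δ p j then (0 : ℕ) else 1) : ℕ) : ℝ) := by
        rw [Nat.cast_sum, Finset.mul_sum]
    _ ≤ (τ : ℝ) * (k : ℝ) := by
        refine mul_le_mul_of_nonneg_left ?_ (by positivity)
        exact_mod_cast hnat
    _ = (k : ℝ) * (τ : ℝ) := mul_comm _ _

lemma upper_bound (hτ : 0 < τ) (hk : 1 ≤ k) (hP : ∀ u, 0 < P u) (hPsum : ∑ u, P u = 1)
    (hμ : ∀ u a, 0 ≤ μ u a ∧ μ u a ≤ 1)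
    (V : ℝ) (hV : ∀ (Z : Finset (Fin k)) (π : (Fin τ → Fin n) → Fin τ → Fin k),
      CausalP π → phVal τ P μ δ Z π ≤ V)
    (A : Alg k n (N * τ)) :
    expReward (N * τ) τ P μ δ A ≤ (N : ℝ) * V + (k : ℝ) * (τ : ℝ) := by
  classical
  rw [expReward_eq hτ A]
  have hbound : ∀ Q : Fin N → Fin τ → Fin n,
      seqReward (N * τ) τ μ δ (A.1 (glue n hτ Q)) (glue n hτ Q) ≤
        (∑ j : Fin N, (if goodPh (N * τ) τ δ (A.1 (glue n hτ Q)) (j : ℕ) then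
          val1 μ (aliveSet (N * τ) τ δ (A.1 (glue n hτ Q)) (j : ℕ)) (Q j)
            (phasePull hτ (A.1 (glue n hτ Q)) j) else 0)) +
        (k : ℝ) * (τ : ℝ) := by
    intro Q
    rw [seqReward_decomp hτ A Q]
    have h1 : ∀ j : Fin N,
        val1 μ (aliveSet (N * τ) τ δ (A.1 (glue n hτ Q)) (j : ℕ)) (Q j)
          (phasePull hτ (A.1 (glue n hτ Q)) j) ≤
        (if goodPh (N * τ) τ δ (A.1 (glue n hτ Q)) (j : ℕ) then
          val1 μ (aliveSet (N * τ) τ δ (A.1 (glue n hτ Q)) (j : ℕ)) (Q j)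
            (phasePull hτ (A.1 (glue n hτ Q)) j) else 0) +
        (if goodPh (N * τ) τ δ (A.1 (glue n hτ Q)) (j : ℕ) then 0 else (τ : ℝ)) := by
      intro j
      by_cases h : goodPh (N * τ) τ δ (A.1 (glue n hτ Q)) (j : ℕ)
      · rw [if_pos h, if_pos h, add_zero]
      · rw [if_neg h, if_neg h, zero_add]
        exact val1_le_tau hμ _ _ _
    calc ∑ j : Fin N, val1 μ (aliveSet (N * τ) τ δ (A.1 (glue n hτ Q)) (j : ℕ)) (Q j)
          (phasePull hτ (A.1 (glue n hτ Q)) j)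
        ≤ ∑ j : Fin N, ((if goodPh (N * τ) τ δ (A.1 (glue n hτ Q)) (j : ℕ) then
            val1 μ (aliveSet (N * τ) τ δ (A.1 (glue n hτ Q)) (j : ℕ)) (Q j)
              (phasePull hτ (A.1 (glue n hτ Q)) j) else 0) +
          (if goodPh (N * τ) τ δ (A.1 (glue n hτ Q)) (j : ℕ) then 0 else (τ : ℝ))) :=
          Finset.sum_le_sum (fun j _ => h1 j)
      _ = (∑ j : Fin N, (if goodPh (N * τ) τ δ (A.1 (glue n hτ Q)) (j : ℕ) then
            val1 μ (aliveSet (N * τ) τ δ (A.1 (glue n hτ Q)) (j : ℕ)) (Q j)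
              (phasePull hτ (A.1 (glue n hτ Q)) j) else 0)) +
          ∑ j : Fin N, (if goodPh (N * τ) τ δ (A.1 (glue n hτ Q)) (j : ℕ) then 0 else (τ : ℝ)) :=
          Finset.sum_add_distrib
      _ ≤ _ := by
          refine add_le_add (le_refl _) ?_
          exact bad_part_le hk Q (A.1 (glue n hτ Q))
  calc ∑ Q : Fin N → Fin τ → Fin n,
        probN N τ P Q * seqReward (N * τ) τ μ δ (A.1 (glue n hτ Q)) (glue n hτ Q)
      ≤ ∑ Q : Fin N → Fin τ → Fin n, probN N τ P Q *
        ((∑ j : Fin N, (if goodPh (N * τ) τ δ (A.1 (glue n hτ Q)) (j : ℕ) then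
          val1 μ (aliveSet (N * τ) τ δ (A.1 (glue n hτ Q)) (j : ℕ)) (Q j)
            (phasePull hτ (A.1 (glue n hτ Q)) j) else 0)) + (k : ℝ) * (τ : ℝ)) :=
        Finset.sum_le_sum (fun Q _ =>
          mul_le_mul_of_nonneg_left (hbound Q) (probN_nonneg hP Q))
    _ = (∑ j : Fin N, ∑ Q : Fin N → Fin τ → Fin n, probN N τ P Q *
          (if goodPh (N * τ) τ δ (A.1 (glue n hτ Q)) (j : ℕ) then
            val1 μ (aliveSet (N * τ) τ δ (A.1 (glue n hτ Q)) (j : ℕ)) (Q j)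
              (phasePull hτ (A.1 (glue n hτ Q)) j) else 0)) +
        (∑ Q : Fin N → Fin τ → Fin n, probN N τ P Q) * ((k : ℝ) * (τ : ℝ)) := by
        simp only [mul_add]
        rw [Finset.sum_add_distrib]
        congr 1
        · simp only [Finset.mul_sum]
          exact Finset.sum_comm
        · rw [Finset.sum_mul]
    _ ≤ (∑ _j : Fin N, V) + 1 * ((k : ℝ) * (τ : ℝ)) := by
        refine add_le_add ?_ ?_
        · exact Finset.sum_le_sum (fun j _ => good_part_le hτ hP hPsum V hV A j)
        · rw [sum_probN hPsum]
    _ = (N : ℝ) * V + (k : ℝ) * (τ : ℝ) := by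
        rw [Finset.sum_const, Finset.card_univ, Fintype.card_fin, nsmul_eq_mul, one_mul]

end PartB2
lemma card_filter_lt' (τ s : ℕ) (hs : s ≤ τ) :
    (Finset.univ.filter (fun i : Fin τ => (i : ℕ) < s)).card = s := by
  have huniv : (Finset.univ : Finset (Fin s)).card = s := by simp
  conv_rhs => rw [← huniv]
  apply Finset.card_bij' (i := fun (a : Fin τ) ha => (⟨(a : ℕ), (Finset.mem_filter.mp ha).2⟩ : Fin s))
    (j := fun (b : Fin s) _ => (⟨(b : ℕ), lt_of_lt_of_le b.2 hs⟩ : Fin τ))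
  all_goals intro a ha
  all_goals first
    | exact Finset.mem_univ _
    | rfl
    | (simp only [Finset.mem_filter, Finset.mem_univ, true_and]; exact a.2)

lemma card_filter_ge' (τ s : ℕ) (hs : s ≤ τ) :
    (Finset.univ.filter (fun i : Fin τ => s ≤ (i : ℕ))).card = τ - s := by
  have h := Finset.card_filter_add_card_filter_not (s := (Finset.univ : Finset (Fin τ)))
    (fun i : Fin τ => (i : ℕ) < s)
  rw [card_filter_lt' τ s hs] at h
  have h2 : (Finset.univ.filter (fun i : Fin τ => ¬ (i : ℕ) < s)) =
      (Finset.univ.filter (fun i : Fin τ => s ≤ (i : ℕ))) := by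
    apply Finset.filter_congr; intro i _; simp [Nat.not_lt]
  rw [h2] at h
  simp only [Finset.card_univ, Fintype.card_fin] at h
  omega

section Build
variable {k n τ : ℕ}

/-- remaining quota deficit -/
noncomputable def needOf (δ : Fin k → ℕ) (Z : Finset (Fin k)) (l : List (Fin k)) : ℕ :=
  ∑ a ∈ Z, (δ a - l.count a)

/-- one step of the commitment-enforcing modification of the policy `π` -/
noncomputable def stepFn (δ : Fin k → ℕ) (Z : Finset (Fin k)) (z0 : Fin k)
    (π : (Fin τ → Fin n) → Fin τ → Fin k) (w : Fin τ → Fin n) (s : ℕ)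
    (l : List (Fin k)) : Fin k :=
  if hs : s < τ then
    if π w ⟨s, hs⟩ ∈ Z ∧ needOf δ Z (π w ⟨s, hs⟩ :: l) + (s + 1) ≤ τ then π w ⟨s, hs⟩
    else if h2 : ∃ a, a ∈ Z ∧ l.count a < δ a then h2.choose else z0
  else z0

/-- prefix of pulls of the modified policy -/
noncomputable def buildL (δ : Fin k → ℕ) (Z : Finset (Fin k)) (z0 : Fin k)
    (π : (Fin τ → Fin n) → Fin τ → Fin k) (w : Fin τ → Fin n) : ℕ → List (Fin k)
  | 0 => []
  | s + 1 => buildL δ Z z0 π w s ++ [stepFn δ Z z0 π w s (buildL δ Z z0 π w s)]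

/-- the modified, always-committed policy -/
noncomputable def modPolicy (δ : Fin k → ℕ) (Z : Finset (Fin k)) (z0 : Fin k)
    (π : (Fin τ → Fin n) → Fin τ → Fin k) (w : Fin τ → Fin n) (s : Fin τ) : Fin k :=
  stepFn δ Z z0 π w (s : ℕ) (buildL δ Z z0 π w (s : ℕ))

variable {δ : Fin k → ℕ} {Z : Finset (Fin k)} {z0 : Fin k}
  {π : (Fin τ → Fin n) → Fin τ → Fin k} {w : Fin τ → Fin n}

lemma count_append_one (l : List (Fin k)) (x a : Fin k) :
    (l ++ [x]).count a = l.count a + (if x = a then 1 else 0) := by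
  simp [List.count_append, List.count_singleton]

lemma count_cons' (l : List (Fin k)) (x a : Fin k) :
    (x :: l).count a = l.count a + (if x = a then 1 else 0) := by
  simp [List.count_cons]

lemma needOf_append_one (l : List (Fin k)) (x : Fin k) :
    needOf δ Z (l ++ [x]) = needOf δ Z (x :: l) := by
  unfold needOf
  exact Finset.sum_congr rfl (fun a _ => by rw [count_append_one, count_cons'])

lemma needOf_cons_le (l : List (Fin k)) (x : Fin k) :
    needOf δ Z (x :: l) ≤ needOf δ Z l := by
  unfold needOf
  refine Finset.sum_le_sum (fun a _ => ?_)
  rw [count_cons']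
  omega

lemma needOf_cons_deficit (l : List (Fin k)) (x : Fin k) (hx : x ∈ Z)
    (hc : l.count x < δ x) : needOf δ Z (x :: l) + 1 = needOf δ Z l := by
  unfold needOf
  rw [← Finset.sum_erase_add Z _ hx, ← Finset.sum_erase_add Z (fun a => δ a - l.count a) hx]
  have h1 : ∀ a ∈ Z.erase x, δ a - (x :: l).count a = δ a - l.count a := by
    intro a ha
    rw [count_cons', if_neg (Finset.ne_of_mem_erase ha).symm, add_zero]
  rw [Finset.sum_congr rfl h1]
  have h2 : (x :: l).count x = l.count x + 1 := by rw [count_cons', if_pos rfl]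
  omega

lemma needOf_eq_zero_iff (l : List (Fin k)) :
    needOf δ Z l = 0 ↔ ∀ a ∈ Z, δ a ≤ l.count a := by
  unfold needOf
  rw [Finset.sum_eq_zero_iff]
  constructor
  · intro h a ha; have := h a ha; omega
  · intro h a ha; have := h a ha; omega

lemma stepFn_mem (hz0 : z0 ∈ Z) (s : ℕ) (l : List (Fin k)) :
    stepFn δ Z z0 π w s l ∈ Z := by
  unfold stepFn
  split_ifs with hs h1 h2
  · exact h1.1
  · exact h2.choose_spec.1
  · exact hz0
  · exact hz0

lemma length_buildL (s : ℕ) : (buildL δ Z z0 π w s).length = s := by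
  induction s with
  | zero => rfl
  | succ s ih => rw [buildL, List.length_append, ih]; rfl

lemma buildL_mem (hz0 : z0 ∈ Z) (s : ℕ) : ∀ x ∈ buildL δ Z z0 π w s, x ∈ Z := by
  induction s with
  | zero => intro x hx; cases hx
  | succ s ih =>
    intro x hx
    rw [buildL, List.mem_append] at hx
    rcases hx with hx | hx
    · exact ih x hx
    · rw [List.mem_singleton] at hx
      rw [hx]
      exact stepFn_mem hz0 s _

lemma needOf_buildL (hz0 : z0 ∈ Z) (hsum : ∑ a ∈ Z, δ a ≤ τ) :
    ∀ s, s ≤ τ → needOf δ Z (buildL δ Z z0 π w s) + s ≤ τ := by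
  intro s
  induction s with
  | zero =>
    intro _
    simp only [buildL, Nat.add_zero]
    calc needOf δ Z [] = ∑ a ∈ Z, δ a := by
          unfold needOf
          exact Finset.sum_congr rfl (fun a _ => by simp)
      _ ≤ τ := hsum
  | succ s ih =>
    intro hs1
    have hs : s < τ := hs1
    have ihs := ih (Nat.le_of_lt hs)
    rw [buildL, needOf_append_one]
    set l := buildL δ Z z0 π w s with hl
    unfold stepFn
    rw [dif_pos hs]
    split_ifs with h1 h2
    · exact h1.2
    · have hspec := h2.choose_spec
      have := needOf_cons_deficit l h2.choose hspec.1 hspec.2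
      omega
    · push_neg at h2
      have hzero : needOf δ Z l = 0 := by
        rw [needOf_eq_zero_iff]
        intro a ha
        exact h2 a ha
      have := needOf_cons_le (δ := δ) (Z := Z) l z0
      omega

lemma buildL_commit (hz0 : z0 ∈ Z) (hsum : ∑ a ∈ Z, δ a ≤ τ) :
    ∀ a ∈ Z, δ a ≤ (buildL δ Z z0 π w τ).count a := by
  have h := needOf_buildL (π := π) (w := w) hz0 hsum τ le_rfl
  have : needOf δ Z (buildL δ Z z0 π w τ) = 0 := by omega
  exact (needOf_eq_zero_iff _).mp this

end Build

section Build2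
variable {k n τ : ℕ}

lemma filter_succ_card (P : Fin τ → Prop) (s : ℕ) (hs : s < τ) :
    (Finset.univ.filter (fun i : Fin τ => (i : ℕ) < s + 1 ∧ P i)).card =
      (Finset.univ.filter (fun i : Fin τ => (i : ℕ) < s ∧ P i)).card +
      (if P ⟨s, hs⟩ then 1 else 0) := by
  classical
  by_cases hP : P ⟨s, hs⟩
  · rw [if_pos hP]
    have heq : (Finset.univ.filter (fun i : Fin τ => (i : ℕ) < s + 1 ∧ P i)) =
        insert ⟨s, hs⟩ (Finset.univ.filter (fun i : Fin τ => (i : ℕ) < s ∧ P i)) := by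
      ext i
      simp only [Finset.mem_filter, Finset.mem_univ, true_and, Finset.mem_insert]
      constructor
      · rintro ⟨h1, h2⟩
        by_cases he : (i : ℕ) = s
        · left; exact Fin.ext he
        · right; exact ⟨by omega, h2⟩
      · rintro (rfl | ⟨h1, h2⟩)
        · exact ⟨Nat.lt_succ_self s, hP⟩
        · exact ⟨by omega, h2⟩
    rw [heq, Finset.card_insert_of_notMem (by
      simp only [Finset.mem_filter, Finset.mem_univ, true_and]
      rintro ⟨h1, -⟩
      exact Nat.lt_irrefl s h1)]
  · rw [if_neg hP, add_zero]
    congr 1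
    ext i
    simp only [Finset.mem_filter, Finset.mem_univ, true_and]
    constructor
    · rintro ⟨h1, h2⟩
      refine ⟨?_, h2⟩
      by_cases he : (i : ℕ) = s
      · exfalso; have : i = ⟨s, hs⟩ := Fin.ext he; rw [this] at h2; exact hP h2
      · omega
    · rintro ⟨h1, h2⟩; exact ⟨by omega, h2⟩

/-- number of pulls of `a` among the first `s` rounds -/
noncomputable def cntP (p : Fin τ → Fin k) (s : ℕ) (a : Fin k) : ℕ :=
  (Finset.univ.filter (fun i : Fin τ => (i : ℕ) < s ∧ p i = a)).card

lemma cntP_succ (p : Fin τ → Fin k) (s : ℕ) (hs : s < τ) (a : Fin k) :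
    cntP p (s + 1) a = cntP p s a + (if p ⟨s, hs⟩ = a then 1 else 0) := by
  classical
  unfold cntP
  by_cases hP : p ⟨s, hs⟩ = a
  · rw [if_pos hP]
    have heq : (Finset.univ.filter (fun i : Fin τ => (i : ℕ) < s + 1 ∧ p i = a)) =
        insert ⟨s, hs⟩ (Finset.univ.filter (fun i : Fin τ => (i : ℕ) < s ∧ p i = a)) := by
      ext i
      simp only [Finset.mem_filter, Finset.mem_univ, true_and, Finset.mem_insert]
      constructor
      · rintro ⟨h1, h2⟩
        by_cases he : (i : ℕ) = s
        · left; exact Fin.ext he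
        · right; exact ⟨by omega, h2⟩
      · rintro (rfl | ⟨h1, h2⟩)
        · exact ⟨Nat.lt_succ_self s, hP⟩
        · exact ⟨by omega, h2⟩
    rw [heq, Finset.card_insert_of_notMem (by
      simp only [Finset.mem_filter, Finset.mem_univ, true_and]
      rintro ⟨h1, -⟩
      exact Nat.lt_irrefl s h1)]
  · rw [if_neg hP, add_zero]
    congr 1
    ext i
    simp only [Finset.mem_filter, Finset.mem_univ, true_and]
    constructor
    · rintro ⟨h1, h2⟩
      refine ⟨?_, h2⟩
      by_cases he : (i : ℕ) = s
      · exfalso; have : i = ⟨s, hs⟩ := Fin.ext he; rw [this] at h2; exact hP h2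
      · omega
    · rintro ⟨h1, h2⟩; exact ⟨by omega, h2⟩

lemma cntP_tau_eq_cnt1 (p : Fin τ → Fin k) (a : Fin k) : cntP p τ a = cnt1 p a := by
  unfold cntP cnt1
  congr 1
  ext i
  simp only [Finset.mem_filter, Finset.mem_univ, true_and]
  exact ⟨fun h => h.2, fun h => ⟨i.2, h⟩⟩

variable {δ : Fin k → ℕ} {Z : Finset (Fin k)} {z0 : Fin k}
  {π : (Fin τ → Fin n) → Fin τ → Fin k} {w : Fin τ → Fin n}

lemma count_buildL (a : Fin k) :
    ∀ s, s ≤ τ → (buildL δ Z z0 π w s).count a = cntP (modPolicy δ Z z0 π w) s a := by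
  intro s
  induction s with
  | zero =>
    intro _
    have : cntP (modPolicy δ Z z0 π w) 0 a = 0 := by
      unfold cntP
      rw [Finset.card_eq_zero]
      ext i
      simp only [Finset.mem_filter, Finset.mem_univ, true_and, Finset.notMem_empty,
        iff_false]
      rintro ⟨h1, -⟩
      omega
    rw [this]
    simp [buildL]
  | succ s ih =>
    intro hs1
    have hs : s < τ := hs1
    rw [buildL, count_append_one, cntP_succ _ s hs a, ih (Nat.le_of_lt hs)]
    rfl

/-- the total number of future `Z`-pulls needed, measured against a committed reference
policy, fits in the remaining rounds -/
lemma sum_deficit (p : Fin τ → Fin k) (s : ℕ) (hs : s < τ)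
    (hcom : ∀ a ∈ Z, δ a ≤ cntP p τ a) :
    ∑ a ∈ Z, (δ a - cntP p (s + 1) a) + (s + 1) ≤ τ := by
  classical
  have hL : ∀ a, cntP p τ a ≤ cntP p (s + 1) a +
      (Finset.univ.filter (fun i : Fin τ => s + 1 ≤ (i : ℕ) ∧ p i = a)).card := by
    intro a
    unfold cntP
    calc (Finset.univ.filter (fun i : Fin τ => (i : ℕ) < τ ∧ p i = a)).card
        ≤ ((Finset.univ.filter (fun i : Fin τ => (i : ℕ) < s + 1 ∧ p i = a)) ∪
          (Finset.univ.filter (fun i : Fin τ => s + 1 ≤ (i : ℕ) ∧ p i = a))).card := by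
          apply Finset.card_le_card
          intro i hi
          simp only [Finset.mem_filter, Finset.mem_univ, true_and, Finset.mem_union] at hi ⊢
          rcases hi with ⟨h1, h2⟩
          by_cases hc : (i : ℕ) < s + 1
          · exact Or.inl ⟨hc, h2⟩
          · exact Or.inr ⟨by omega, h2⟩
      _ ≤ _ := Finset.card_union_le _ _
  have hfib : ∑ a ∈ Z, (Finset.univ.filter
      (fun i : Fin τ => s + 1 ≤ (i : ℕ) ∧ p i = a)).card ≤ τ - (s + 1) := by
    have hkey : (Finset.univ.filter (fun i : Fin τ => s + 1 ≤ (i : ℕ) ∧ p i ∈ Z)).card =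
        ∑ a ∈ Z, (Finset.univ.filter (fun i : Fin τ => s + 1 ≤ (i : ℕ) ∧ p i = a)).card := by
      rw [Finset.card_eq_sum_card_fiberwise (f := p)
        (t := Z) (fun i hi => (Finset.mem_filter.mp hi).2.2)]
      refine Finset.sum_congr rfl (fun a ha => ?_)
      congr 1
      rw [Finset.filter_filter]
      ext i
      simp only [Finset.mem_filter, Finset.mem_univ, true_and]
      constructor
      · rintro ⟨⟨h1, -⟩, h2⟩; exact ⟨h1, h2⟩
      · rintro ⟨h1, h2⟩; exact ⟨⟨h1, h2 ▸ ha⟩, h2⟩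
    rw [← hkey]
    calc (Finset.univ.filter (fun i : Fin τ => s + 1 ≤ (i : ℕ) ∧ p i ∈ Z)).card
        ≤ (Finset.univ.filter (fun i : Fin τ => s + 1 ≤ (i : ℕ))).card :=
          Finset.card_le_card (fun i hi => by
            simp only [Finset.mem_filter, Finset.mem_univ, true_and] at hi ⊢
            exact hi.1)
      _ = τ - (s + 1) := card_filter_ge' τ (s + 1) hs
  have hterm : ∑ a ∈ Z, (δ a - cntP p (s + 1) a) ≤
      ∑ a ∈ Z, (Finset.univ.filter (fun i : Fin τ => s + 1 ≤ (i : ℕ) ∧ p i = a)).card := by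
    refine Finset.sum_le_sum (fun a ha => ?_)
    have h1 := hcom a ha
    have h2 := hL a
    omega
  omega

end Build2

section Build3
variable {k n τ : ℕ} {δ : Fin k → ℕ} {Z : Finset (Fin k)} {z0 : Fin k}
  {π : (Fin τ → Fin n) → Fin τ → Fin k} {w : Fin τ → Fin n}

/-- one step of the "following" argument: if the count of the modified policy dominates the
count of a committed reference policy, the reference pull is safe to follow -/
lemma follow_step (hcom : ∀ a ∈ Z, δ a ≤ cntP (π w) τ a) (s : ℕ) (hs : s < τ)
    (hdom : ∀ a ∈ Z, cntP (π w) s a ≤ (buildL δ Z z0 π w s).count a)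
    (hbZ : π w ⟨s, hs⟩ ∈ Z) :
    stepFn δ Z z0 π w s (buildL δ Z z0 π w s) = π w ⟨s, hs⟩ := by
  set b := π w ⟨s, hs⟩ with hb
  set l := buildL δ Z z0 π w s with hl
  have hcond : needOf δ Z (b :: l) + (s + 1) ≤ τ := by
    have h1 : needOf δ Z (b :: l) ≤ ∑ a ∈ Z, (δ a - cntP (π w) (s + 1) a) := by
      unfold needOf
      refine Finset.sum_le_sum (fun a ha => ?_)
      have hc := hdom a ha
      rw [count_cons', cntP_succ _ s hs a]
      rw [← hb]
      by_cases he : b = a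
      · rw [if_pos he]; omega
      · rw [if_neg he]; omega
    have h2 := sum_deficit (δ := δ) (Z := Z) (π w) s hs hcom
    omega
  unfold stepFn
  rw [dif_pos hs, if_pos ⟨hbZ, hcond⟩]

lemma dom_buildL (hcom : ∀ a ∈ Z, δ a ≤ cntP (π w) τ a) :
    ∀ s, s ≤ τ → ∀ a ∈ Z, cntP (π w) s a ≤ (buildL δ Z z0 π w s).count a := by
  intro s
  induction s with
  | zero =>
    intro _ a _
    unfold cntP
    have : (Finset.univ.filter (fun i : Fin τ => (i : ℕ) < 0 ∧ π w i = a)) = ∅ := by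
      ext i
      simp only [Finset.mem_filter, Finset.mem_univ, true_and, Finset.notMem_empty, iff_false]
      rintro ⟨h1, -⟩
      omega
    rw [this]
    simp
  | succ s ih =>
    intro hs1 a ha
    have hs : s < τ := hs1
    have ihs := ih (Nat.le_of_lt hs)
    rw [buildL, count_append_one, cntP_succ _ s hs a]
    by_cases hbZ : π w ⟨s, hs⟩ ∈ Z
    · rw [follow_step hcom s hs ihs hbZ]
      have := ihs a ha
      omega
    · have hne : ¬ (π w ⟨s, hs⟩ = a) := fun he => hbZ (he ▸ ha)
      rw [if_neg hne]
      have := ihs a ha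
      omega

/-- the modified policy follows every `Z`-pull of a committed reference policy -/
lemma modPolicy_follows (hcom : commit1 δ Z (π w)) (s : Fin τ) (hbZ : π w s ∈ Z) :
    modPolicy δ Z z0 π w s = π w s := by
  have hcom' : ∀ a ∈ Z, δ a ≤ cntP (π w) τ a := by
    intro a ha
    rw [cntP_tau_eq_cnt1]
    exact hcom a ha
  have hdom := dom_buildL (z0 := z0) hcom' (s : ℕ) (Nat.le_of_lt s.2)
  have h := follow_step hcom' (s : ℕ) s.2 hdom (by
    rw [show (⟨(s : ℕ), s.2⟩ : Fin τ) = s from Fin.ext rfl]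
    exact hbZ)
  unfold modPolicy
  rw [h]

lemma buildL_congr (hπ : CausalP π) (w' : Fin τ → Fin n) :
    ∀ s, (∀ s' : Fin τ, (s' : ℕ) < s → w s' = w' s') →
      buildL δ Z z0 π w s = buildL δ Z z0 π w' s := by
  intro s
  induction s with
  | zero => intro _; rfl
  | succ s ih =>
    intro hag
    have ihs := ih (fun s' hs' => hag s' (by omega))
    rw [buildL, buildL, ihs]
    congr 2
    unfold stepFn
    by_cases hs : s < τ
    · rw [dif_pos hs, dif_pos hs]
      have hπeq : π w ⟨s, hs⟩ = π w' ⟨s, hs⟩ := by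
        apply hπ
        intro s' hs'
        exact hag s' (by exact Nat.lt_succ_of_le hs')
      rw [hπeq]
    · rw [dif_neg hs, dif_neg hs]

lemma modPolicy_causal (hπ : CausalP π) : CausalP (modPolicy δ Z z0 π) := by
  intro w w' s hag
  unfold modPolicy
  rw [buildL_congr hπ w' (s : ℕ) (fun s' hs' => hag s' (Nat.le_of_lt hs'))]
  unfold stepFn
  by_cases hs : (s : ℕ) < τ
  · rw [dif_pos hs, dif_pos hs]
    have hπeq : π w ⟨(s : ℕ), hs⟩ = π w' ⟨(s : ℕ), hs⟩ := by
      have : (⟨(s : ℕ), hs⟩ : Fin τ) = s := Fin.ext rfl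
      rw [this]
      exact hπ w w' s hag
    rw [hπeq]
  · rw [dif_neg hs, dif_neg hs]

lemma modPolicy_mem (hz0 : z0 ∈ Z) (s : Fin τ) : modPolicy δ Z z0 π w s ∈ Z :=
  stepFn_mem hz0 (s : ℕ) _

lemma modPolicy_commit (hz0 : z0 ∈ Z) (hsum : ∑ a ∈ Z, δ a ≤ τ) :
    commit1 δ Z (modPolicy δ Z z0 π w) := by
  intro a ha
  rw [← cntP_tau_eq_cnt1, ← count_buildL a τ le_rfl]
  exact buildL_commit hz0 hsum a ha

lemma modPolicy_dominates {μ : Fin n → Fin k → ℝ} (hμ : ∀ u a, 0 ≤ μ u a ∧ μ u a ≤ 1)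
    (hcom : commit1 δ Z (π w)) :
    val1 μ Z w (π w) ≤ ∑ s : Fin τ, μ (w s) (modPolicy δ Z z0 π w s) := by
  unfold val1
  refine Finset.sum_le_sum (fun s _ => ?_)
  by_cases hbZ : π w s ∈ Z
  · rw [if_pos hbZ, modPolicy_follows hcom s hbZ]
  · rw [if_neg hbZ]
    exact (hμ (w s) _).1

end Build3

section Rep
variable {k n τ N : ℕ} {P : Fin n → ℝ} {μ : Fin n → Fin k → ℝ} {δ : Fin k → ℕ}

/-- types of phase `j` -/
def phaseOf (hτ : 0 < τ) (q : Fin (N * τ) → Fin n) (j : Fin N) : Fin τ → Fin n :=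
  fun s => q ((splitRound N τ hτ).symm (j, s))

lemma phaseOf_glue (hτ : 0 < τ) (Q : Fin N → Fin τ → Fin n) (j : Fin N) :
    phaseOf hτ (glue n hτ Q) j = Q j :=
  funext (fun s => glue_apply_symm hτ Q j s)

/-- the algorithm that runs the modified committed policy independently in every phase -/
noncomputable def repAlg (hτ : 0 < τ) (δ : Fin k → ℕ) (Z : Finset (Fin k)) (z0 : Fin k)
    (π : (Fin τ → Fin n) → Fin τ → Fin k) (hπ : CausalP π) : Alg k n (N * τ) := by
  refine ⟨fun q t => modPolicy δ Z z0 π (phaseOf hτ q ((splitRound N τ hτ) t).1)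
    ((splitRound N τ hτ) t).2, ?_⟩
  intro q q' t hag
  apply modPolicy_causal hπ
  intro s' hs'
  unfold phaseOf
  apply hag
  show (((splitRound N τ hτ).symm (((splitRound N τ hτ) t).1, s')) : ℕ) ≤ (t : ℕ)
  rw [splitRound_symm_coe]
  have hval : (t : ℕ) = (((splitRound N τ hτ) t).1 : ℕ) * τ + (((splitRound N τ hτ) t).2 : ℕ) := by
    rw [splitRound_fst, splitRound_snd]
    conv_lhs => rw [← Nat.div_add_mod (t : ℕ) τ]
    ring
  have : (s' : ℕ) ≤ ((((splitRound N τ hτ) t).2 : ℕ)) := hs'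
  omega

lemma repAlg_eval (hτ : 0 < τ) (Z : Finset (Fin k)) (z0 : Fin k)
    (π : (Fin τ → Fin n) → Fin τ → Fin k) (hπ : CausalP π)
    (q : Fin (N * τ) → Fin n) (j : Fin N) (s : Fin τ) :
    (repAlg hτ δ Z z0 π hπ).1 q ((splitRound N τ hτ).symm (j, s)) =
      modPolicy δ Z z0 π (phaseOf hτ q j) s := by
  show modPolicy δ Z z0 π
      (phaseOf hτ q ((splitRound N τ hτ) ((splitRound N τ hτ).symm (j, s))).1)
      ((splitRound N τ hτ) ((splitRound N τ hτ).symm (j, s))).2 = _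
  rw [Equiv.apply_symm_apply]

lemma phasePull_repAlg (hτ : 0 < τ) (Z : Finset (Fin k)) (z0 : Fin k)
    (π : (Fin τ → Fin n) → Fin τ → Fin k) (hπ : CausalP π)
    (q : Fin (N * τ) → Fin n) (j : Fin N) :
    phasePull hτ ((repAlg hτ δ Z z0 π hπ).1 q) j = modPolicy δ Z z0 π (phaseOf hτ q j) :=
  funext (fun s => repAlg_eval hτ Z z0 π hπ q j s)

lemma repAlg_phaseInd (hτ : 0 < τ) (Z : Finset (Fin k)) (z0 : Fin k)
    (π : (Fin τ → Fin n) → Fin τ → Fin k) (hπ : CausalP π) :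
    PhaseInd τ (repAlg (N := N) hτ δ Z z0 π hπ) := by
  intro q i j s hs hi hj hag
  have hiN : i < N := by
    by_contra hc
    push_neg at hc
    have : N * τ ≤ i * τ := Nat.mul_le_mul_right _ hc
    omega
  have hjN : j < N := by
    by_contra hc
    push_neg at hc
    have : N * τ ≤ j * τ := Nat.mul_le_mul_right _ hc
    omega
  have hti : (⟨i * τ + s, hi⟩ : Fin (N * τ)) = (splitRound N τ hτ).symm (⟨i, hiN⟩, ⟨s, hs⟩) :=
    Fin.ext (by rw [splitRound_symm_coe])
  have htj : (⟨j * τ + s, hj⟩ : Fin (N * τ)) = (splitRound N τ hτ).symm (⟨j, hjN⟩, ⟨s, hs⟩) :=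
    Fin.ext (by rw [splitRound_symm_coe])
  rw [hti, htj, repAlg_eval hτ Z z0 π hπ q ⟨i, hiN⟩ ⟨s, hs⟩,
    repAlg_eval hτ Z z0 π hπ q ⟨j, hjN⟩ ⟨s, hs⟩]
  apply modPolicy_causal hπ
  intro s' hs'
  unfold phaseOf
  have hs'' : (s' : ℕ) ≤ s := hs'
  have hli : i * τ + (s' : ℕ) < N * τ := by
    have := ((splitRound N τ hτ).symm (⟨i, hiN⟩, s')).2
    rwa [splitRound_symm_coe] at this
  have hlj : j * τ + (s' : ℕ) < N * τ := by
    have := ((splitRound N τ hτ).symm (⟨j, hjN⟩, s')).2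
    rwa [splitRound_symm_coe] at this
  have h := hag (s' : ℕ) hs'' hli hlj
  have e1 : ((splitRound N τ hτ).symm (⟨i, hiN⟩, s')) = ⟨i * τ + (s' : ℕ), hli⟩ :=
    Fin.ext (by rw [splitRound_symm_coe])
  have e2 : ((splitRound N τ hτ).symm (⟨j, hjN⟩, s')) = ⟨j * τ + (s' : ℕ), hlj⟩ :=
    Fin.ext (by rw [splitRound_symm_coe])
  rw [e1, e2]
  exact h

lemma repAlg_committed (hτ : 0 < τ) (Z : Finset (Fin k)) (z0 : Fin k) (hz0 : z0 ∈ Z)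
    (hsum : ∑ a ∈ Z, δ a ≤ τ)
    (π : (Fin τ → Fin n) → Fin τ → Fin k) (hπ : CausalP π) :
    Committed τ δ Z (repAlg (N := N) hτ δ Z z0 π hπ) := by
  intro q
  constructor
  · intro t
    exact modPolicy_mem hz0 _
  · intro j hjT a ha
    have hjN : j < N := by
      by_contra hc
      push_neg at hc
      have h1 : (N + 1) * τ ≤ (j + 1) * τ := Nat.mul_le_mul_right _ (by omega)
      have h2 : N * τ < (N + 1) * τ := by
        have : (N + 1) * τ = N * τ + τ := by ring
        omega
      omega
    rw [show j = ((⟨j, hjN⟩ : Fin N) : ℕ) from rfl,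
      pullsInPhase_eq_cnt1 hτ _ ⟨j, hjN⟩ a, phasePull_repAlg hτ Z z0 π hπ q ⟨j, hjN⟩]
    exact modPolicy_commit hz0 hsum a ha

lemma repAlg_expReward (hτ : 0 < τ) (hP : ∀ u, 0 < P u) (hPsum : ∑ u, P u = 1)
    (hμ : ∀ u a, 0 ≤ μ u a ∧ μ u a ≤ 1)
    (Z : Finset (Fin k)) (z0 : Fin k) (hz0 : z0 ∈ Z) (hsum : ∑ a ∈ Z, δ a ≤ τ)
    (π : (Fin τ → Fin n) → Fin τ → Fin k) (hπ : CausalP π) :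
    (N : ℝ) * phVal τ P μ δ Z π ≤
      expReward (N * τ) τ P μ δ (repAlg (N := N) hτ δ Z z0 π hπ) := by
  classical
  set A := repAlg (N := N) hτ δ Z z0 π hπ with hA
  rw [expReward_eq hτ A]
  have hseq : ∀ Q : Fin N → Fin τ → Fin n,
      seqReward (N * τ) τ μ δ (A.1 (glue n hτ Q)) (glue n hτ Q) =
      ∑ j : Fin N, ∑ s : Fin τ, μ (Q j s) (modPolicy δ Z z0 π (Q j) s) := by
    intro Q
    set p := A.1 (glue n hτ Q) with hp
    have hav : ∀ t : Fin (N * τ), availableAt (N * τ) τ δ p t (p t) := by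
      intro t i hi
      have hiN : i < N := by
        by_contra hc
        push_neg at hc
        have h1 : N * τ ≤ i * τ := Nat.mul_le_mul_right _ hc
        have h2 := t.2
        have h3 : i * τ ≤ (i + 1) * τ := by
          have : (i + 1) * τ = i * τ + τ := by ring
          omega
        omega
      have := pullsInPhase_eq_cnt1 hτ p ⟨i, hiN⟩ (p t)
      rw [show i = ((⟨i, hiN⟩ : Fin N) : ℕ) from rfl, this,
        phasePull_repAlg hτ Z z0 π hπ (glue n hτ Q) ⟨i, hiN⟩]
      apply modPolicy_commit hz0 hsum
      exact modPolicy_mem hz0 _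
    unfold seqReward
    rw [Finset.sum_congr rfl (fun t _ => if_pos (hav t)),
      sum_split hτ (fun t => μ (glue n hτ Q t) (p t))]
    refine Finset.sum_congr rfl (fun j _ => Finset.sum_congr rfl (fun s _ => ?_))
    rw [glue_apply_symm, hp, repAlg_eval hτ Z z0 π hπ (glue n hτ Q) j s, phaseOf_glue]
  calc (N : ℝ) * phVal τ P μ δ Z π
      = ∑ _j : Fin N, phVal τ P μ δ Z π := by
        rw [Finset.sum_const, Finset.card_univ, Fintype.card_fin, nsmul_eq_mul]
    _ ≤ ∑ j : Fin N, ∑ w : Fin τ → Fin n, pw τ P w *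
          (∑ s : Fin τ, μ (w s) (modPolicy δ Z z0 π w s)) := by
        refine Finset.sum_le_sum (fun j _ => ?_)
        unfold phVal
        refine Finset.sum_le_sum (fun w _ => ?_)
        refine mul_le_mul_of_nonneg_left ?_ (pw_nonneg hP w)
        by_cases hcom : commit1 δ Z (π w)
        · rw [if_pos hcom]
          exact modPolicy_dominates hμ hcom
        · rw [if_neg hcom]
          exact Finset.sum_nonneg (fun s _ => (hμ (w s) _).1)
    _ = ∑ j : Fin N, ∑ Q : Fin N → Fin τ → Fin n, probN N τ P Q *
          (∑ s : Fin τ, μ (Q j s) (modPolicy δ Z z0 π (Q j) s)) := by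
        refine Finset.sum_congr rfl (fun j _ => ?_)
        rw [marginal hPsum j (fun w => ∑ s : Fin τ, μ (w s) (modPolicy δ Z z0 π w s))]
    _ = ∑ Q : Fin N → Fin τ → Fin n, probN N τ P Q *
          seqReward (N * τ) τ μ δ (A.1 (glue n hτ Q)) (glue n hτ Q) := by
        rw [Finset.sum_comm]
        refine Finset.sum_congr rfl (fun Q _ => ?_)
        rw [hseq Q, Finset.mul_sum]

end Rep

section Final
variable {k n τ : ℕ} {P : Fin n → ℝ} {μ : Fin n → Fin k → ℝ} {δ : Fin k → ℕ}

lemma phVal_empty (π : (Fin τ → Fin n) → Fin τ → Fin k) : phVal τ P μ δ ∅ π = 0 := by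
  unfold phVal val1 commit1
  simp

lemma phVal_nonneg (hP : ∀ u, 0 < P u) (hμ : ∀ u a, 0 ≤ μ u a ∧ μ u a ≤ 1)
    (Z : Finset (Fin k)) (π : (Fin τ → Fin n) → Fin τ → Fin k) :
    0 ≤ phVal τ P μ δ Z π := by
  refine Finset.sum_nonneg (fun w _ => mul_nonneg (pw_nonneg hP w) ?_)
  by_cases h : commit1 δ Z (π w)
  · rw [if_pos h]; exact val1_nonneg hμ _ _ _
  · rw [if_neg h]

end Final

/-- Theorem 2 of the paper: under the fast-exploration assumption, the best phase-independent
committed algorithm is within `k·τ` of `OPT`. -/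
theorem pico_approximates_opt
    (k n τ N : ℕ) (hk : 1 ≤ k) (hn : 1 ≤ n) (hτ : 1 ≤ τ) (hN : 1 ≤ N)
    (P : Fin n → ℝ) (hP : ∀ u, 0 < P u) (hPsum : ∑ u, P u = 1)
    (μ : Fin n → Fin k → ℝ) (hμ : ∀ u a, 0 ≤ μ u a ∧ μ u a ≤ 1)
    (δ : Fin k → ℕ) (hδ : ∀ a, δ a ≤ τ)
    (γ : ℝ) (hγ0 : 0 < γ) (hγk : γ ≤ 1 / (k : ℝ))
    (hfeas : ∑ a : Fin k, max ((δ a : ℝ)) (γ * (τ : ℝ)) ≤ (τ : ℝ)) :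
    picoReward k n (N * τ) τ P μ δ
      ≥ optReward k n (N * τ) τ P μ δ - (k : ℝ) * (τ : ℝ) := by
  classical
  have hτ0 : 0 < τ := hτ
  have hk0 : (0 : ℕ) < k := hk
  set a0 : Fin k := ⟨0, hk0⟩ with ha0def
  haveI : Nonempty (Alg k n (N * τ)) := ⟨⟨fun _ _ => a0, fun _ _ _ _ => rfl⟩⟩
  have hτR : (0 : ℝ) < (τ : ℝ) := by exact_mod_cast hτ0
  -- feasibility of committing to any subset
  have hfeasδ : ∀ Z : Finset (Fin k), ∑ a ∈ Z, δ a ≤ τ := by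
    intro Z
    have h1 : ((∑ a ∈ Z, δ a : ℕ) : ℝ) ≤ (τ : ℝ) := by
      rw [Nat.cast_sum]
      calc ∑ a ∈ Z, (δ a : ℝ) ≤ ∑ a ∈ Z, max (δ a : ℝ) (γ * (τ : ℝ)) :=
            Finset.sum_le_sum (fun a _ => le_max_left _ _)
        _ ≤ ∑ a : Fin k, max (δ a : ℝ) (γ * (τ : ℝ)) := by
            refine Finset.sum_le_sum_of_subset_of_nonneg (Finset.subset_univ Z) ?_
            intro a _ _
            exact le_trans (Nat.cast_nonneg _) (le_max_left _ _)
        _ ≤ (τ : ℝ) := hfeas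
    exact_mod_cast h1
  -- the optimal single-phase committed pair
  haveI : Nonempty (Finset (Fin k) × ((Fin τ → Fin n) → Fin τ → Fin k)) :=
    ⟨(∅, fun _ _ => a0)⟩
  obtain ⟨⟨Zm, πm⟩, hmax⟩ := Finite.exists_max
    (fun p : Finset (Fin k) × ((Fin τ → Fin n) → Fin τ → Fin k) =>
      if CausalP p.2 then phVal τ P μ δ p.1 p.2 else 0)
  set V : ℝ := if CausalP πm then phVal τ P μ δ Zm πm else 0 with hVdef
  have hV : ∀ (Z : Finset (Fin k)) (π : (Fin τ → Fin n) → Fin τ → Fin k),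
      CausalP π → phVal τ P μ δ Z π ≤ V := by
    intro Z π h
    have := hmax (Z, π)
    rwa [if_pos h] at this
  -- upper bound on OPT
  have hopt : optReward k n (N * τ) τ P μ δ ≤ (N : ℝ) * V + (k : ℝ) * (τ : ℝ) := by
    unfold optReward
    exact ciSup_le (fun A => upper_bound hτ0 hk hP hPsum hμ V hV A)
  -- lower bound on PICO
  have hex : ∃ A : {A : Alg k n (N * τ) // PhaseInd τ A ∧ ∃ Z : Finset (Fin k),
      Committed τ δ Z A}, (N : ℝ) * V ≤ expReward (N * τ) τ P μ δ A.1 := by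
    by_cases hc : CausalP πm ∧ Zm.Nonempty
    · obtain ⟨hcaus, hne⟩ := hc
      obtain ⟨z0, hz0⟩ := hne
      refine ⟨⟨repAlg hτ0 δ Zm z0 πm hcaus,
        repAlg_phaseInd hτ0 Zm z0 πm hcaus,
        ⟨Zm, repAlg_committed hτ0 Zm z0 hz0 (hfeasδ Zm) πm hcaus⟩⟩, ?_⟩
      have hlow := repAlg_expReward (N := N) hτ0 hP hPsum hμ Zm z0 hz0 (hfeasδ Zm) πm hcaus
      calc (N : ℝ) * V = (N : ℝ) * phVal τ P μ δ Zm πm := by rw [hVdef, if_pos hcaus]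
        _ ≤ _ := hlow
    · have hV0 : V = 0 := by
        rw [hVdef]
        by_cases h1 : CausalP πm
        · rw [if_pos h1]
          have hZ : Zm = ∅ := Finset.not_nonempty_iff_eq_empty.mp (fun hne => hc ⟨h1, hne⟩)
          rw [hZ]
          exact phVal_empty πm
        · rw [if_neg h1]
      have hπ0 : CausalP (fun (_ : Fin τ → Fin n) (_ : Fin τ) => a0) := fun _ _ _ _ => rfl
      have hz0 : a0 ∈ ({a0} : Finset (Fin k)) := Finset.mem_singleton_self a0
      have hsum0 : ∑ a ∈ ({a0} : Finset (Fin k)), δ a ≤ τ := by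
        rw [Finset.sum_singleton]; exact hδ a0
      refine ⟨⟨repAlg hτ0 δ {a0} a0 _ hπ0,
        repAlg_phaseInd hτ0 {a0} a0 _ hπ0,
        ⟨{a0}, repAlg_committed hτ0 {a0} a0 hz0 hsum0 _ hπ0⟩⟩, ?_⟩
      have hlow := repAlg_expReward (N := N) hτ0 hP hPsum hμ {a0} a0 hz0 hsum0 _ hπ0
      have hph0 : 0 ≤ phVal τ P μ δ {a0} (fun _ _ => a0) := phVal_nonneg hP hμ _ _
      rw [hV0, mul_zero]
      calc (0 : ℝ) ≤ (N : ℝ) * phVal τ P μ δ {a0} (fun _ _ => a0) :=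
            mul_nonneg (Nat.cast_nonneg _) hph0
        _ ≤ _ := hlow
  obtain ⟨Aw, hAw⟩ := hex
  have hpico : (N : ℝ) * V ≤ picoReward k n (N * τ) τ P μ δ := by
    unfold picoReward
    have hb : BddAbove (Set.range (fun A : {A : Alg k n (N * τ) // PhaseInd τ A ∧
        ∃ Z : Finset (Fin k), Committed τ δ Z A} => expReward (N * τ) τ P μ δ A.1)) :=
      Set.Finite.bddAbove (Set.finite_range _)
    exact le_trans hAw (le_ciSup hb Aw)
  linarith

end ExposureBandits
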